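/- There is no polynomial p in two real variables such that \{(x,y) \in \mathbb{R}^2 : p(x,y) \geq 0\} = \{(x,y) \in \mathbb{R}^2 : x \geq 0 \text{ and } y \geq 0\}. That is, the closed positive quadrant E_1 in \mathbb{R}^2 is not a principal semi-algebraic set. -/

import Mathlib

open MvPolynomial

/-- The closed positive quadrant in `ℝ²` is not a principal semi-algebraic set: no single
polynomial inequality `p(x,y) ≥ 0` carves out `{(x,y) : x ≥ 0 and y ≥ 0}`. -/
theorem quadrant_not_principal :
    ¬ ∃ p : MvPolynomial (Fin 2) ℝ,
      {x : Fin 2 → ℝ | 0 ≤ eval x p} = {x : Fin 2 → ℝ | 0 ≤ x 0 ∧ 0 ≤ x 1} := by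
  rintro ⟨p, hp⟩
  have hmem : ∀ x : Fin 2 → ℝ, 0 ≤ eval x p ↔ (0 ≤ x 0 ∧ 0 ≤ x 1) := by
    intro x
    have := Set.ext_iff.1 hp x
    simpa using this
  -- Step 1: p(t, 0) = 0 for all t ≥ 0
  have key : ∀ t : ℝ, 0 ≤ t → eval ![t, (0:ℝ)] p = 0 := by
    intro t ht
    have h1 : 0 ≤ eval ![t, (0:ℝ)] p := (hmem _).2 ⟨by simpa using ht, by simp⟩
    have cont : Continuous fun s : ℝ => eval ![t, s] p := by
      apply (MvPolynomial.continuous_eval p).comp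
      apply continuous_pi
      intro i
      fin_cases i
      · simpa using continuous_const
      · simpa using continuous_id'
    have htend : Filter.Tendsto (fun s : ℝ => eval ![t, s] p) (nhdsWithin 0 (Set.Iio 0))
        (nhds (eval ![t, (0:ℝ)] p)) :=
      (cont.tendsto 0).mono_left nhdsWithin_le_nhds
    have h2 : eval ![t, (0:ℝ)] p ≤ 0 := by
      refine le_of_tendsto htend ?_
      filter_upwards [self_mem_nhdsWithin] with s hs
      by_contra hcon
      push_neg at hcon
      have := ((hmem ![t, s]).1 hcon.le).2
      simp only [Matrix.cons_val_one, Matrix.head_cons] at this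
      exact absurd this (not_le.2 hs)
    linarith
  -- Step 2: the univariate polynomial q(X) = p(X, 0) vanishes on [0, ∞), hence is zero
  set q : Polynomial ℝ := MvPolynomial.aeval ![Polynomial.X, 0] p with hqdef
  have hq : ∀ t : ℝ, q.eval t = eval ![t, (0:ℝ)] p := by
    intro t
    rw [hqdef, MvPolynomial.aeval_def,
      show (Polynomial.eval t : Polynomial ℝ → ℝ) = (Polynomial.evalRingHom t : Polynomial ℝ → ℝ)
        from rfl,
      MvPolynomial.eval₂_comp_left (Polynomial.evalRingHom t)]
    rw [MvPolynomial.eval]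
    congr 1
    · ext r; simp
    · funext i; fin_cases i <;> simp
  have hq0 : q = 0 := by
    apply Polynomial.eq_zero_of_infinite_isRoot
    apply Set.Infinite.mono (s := Set.Ici (0:ℝ))
    · intro t ht
      simp only [Set.mem_setOf_eq, Polynomial.IsRoot]
      rw [hq t]
      exact key t ht
    · exact Set.Ici_infinite 0
  -- Step 3: then p(-1, 0) = 0 ≥ 0 while (-1, 0) is not in the quadrant
  have hcontra : eval ![(-1:ℝ), (0:ℝ)] p = 0 := by
    have := hq (-1)
    rw [hq0] at this
    simpa using this.symm
  have := ((hmem ![(-1:ℝ), (0:ℝ)]).1 (le_of_eq hcontra.symm)).1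
  simp only [Matrix.cons_val_zero] at this
  linarith
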